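/- Let a ≥ 0 and ζ > 0 be real numbers, and set δ = max(√a, ζ) (so δ > 0). Let (e_k) and (o_k) be sequences of nonnegative real numbers such that for all k: e_{k+1}² ≤ a · e_k² + o_k² and o_{k+1} ≤ ζ · o_k. Then for every k ≥ 0, e_k ≤ √(k+1) · δ^k · √(e₀² + o₀² / δ²). -/
import Mathlib


/-- Geometric decay (with a polynomial factor, covering the degenerate case
`ζ² = a`) for the error recursion, with overall rate `δ = max (√a) ζ`. -/
theorem error_recursion_geometric_decay_general
    (a ζ : ℝ) (ha : 0 ≤ a) (hζ : 0 < ζ)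
    (e o : ℕ → ℝ) (he : ∀ k, 0 ≤ e k) (ho : ∀ k, 0 ≤ o k)
    (hrec : ∀ k, (e (k + 1)) ^ 2 ≤ a * (e k) ^ 2 + (o k) ^ 2)
    (hosc : ∀ k, o (k + 1) ≤ ζ * o k) :
    ∀ k, e k ≤ Real.sqrt (k + 1) * (max (Real.sqrt a) ζ) ^ k *
      Real.sqrt ((e 0) ^ 2 + (o 0) ^ 2 / (max (Real.sqrt a) ζ) ^ 2) := by
  set δ := max (Real.sqrt a) ζ with hδdef
  have hδpos : 0 < δ := lt_of_lt_of_le hζ (le_max_right _ _)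
  have haδ : a ≤ δ ^ 2 := by
    have h1 : Real.sqrt a ≤ δ := le_max_left _ _
    nlinarith [Real.sq_sqrt ha, Real.sqrt_nonneg a]
  have hζδ : ζ ≤ δ := le_max_right _ _
  have hoscn : ∀ k, o k ≤ ζ ^ k * o 0 := by
    intro k
    induction k with
    | zero => simp
    | succ n ih =>
      calc o (n + 1) ≤ ζ * o n := hosc n
        _ ≤ ζ * (ζ ^ n * o 0) := by
            exact mul_le_mul_of_nonneg_left ih hζ.le
        _ = ζ ^ (n + 1) * o 0 := by ring
  have key : ∀ k, e k ^ 2 ≤ (δ ^ 2) ^ k * e 0 ^ 2 +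
      (k : ℝ) * (δ ^ 2) ^ k * (o 0 ^ 2 / δ ^ 2) := by
    intro k
    induction k with
    | zero => simp
    | succ n ih =>
      have h1 : o n ^ 2 ≤ (δ ^ 2) ^ n * o 0 ^ 2 := by
        have h2 : o n ≤ ζ ^ n * o 0 := hoscn n
        have h3 : ζ ^ n ≤ δ ^ n := pow_le_pow_left₀ hζ.le hζδ n
        have h4 : (0:ℝ) ≤ ζ ^ n * o 0 := mul_nonneg (pow_nonneg hζ.le n) (ho 0)
        have h5 : o n ^ 2 ≤ (ζ ^ n * o 0) ^ 2 := by
          nlinarith [ho n]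
        calc o n ^ 2 ≤ (ζ ^ n * o 0) ^ 2 := h5
          _ ≤ (δ ^ n * o 0) ^ 2 := by
              have := mul_le_mul_of_nonneg_right h3 (ho 0)
              gcongr
          _ = (δ ^ 2) ^ n * o 0 ^ 2 := by ring
      have hrn := hrec n
      have h6 : a * e n ^ 2 ≤ δ ^ 2 * e n ^ 2 := by
        nlinarith [sq_nonneg (e n)]
      have h7 : δ ^ 2 * e n ^ 2 ≤ δ ^ 2 * ((δ ^ 2) ^ n * e 0 ^ 2 +
          (n : ℝ) * (δ ^ 2) ^ n * (o 0 ^ 2 / δ ^ 2)) := by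
        exact mul_le_mul_of_nonneg_left ih (by positivity)
      have hδ2 : (δ:ℝ) ^ 2 ≠ 0 := by positivity
      have key2 : δ ^ 2 * ((δ ^ 2) ^ n * e 0 ^ 2 +
          (n : ℝ) * (δ ^ 2) ^ n * (o 0 ^ 2 / δ ^ 2)) + (δ ^ 2) ^ n * o 0 ^ 2
          = (δ ^ 2) ^ (n + 1) * e 0 ^ 2 +
            ((n : ℝ) + 1) * (δ ^ 2) ^ (n + 1) * (o 0 ^ 2 / δ ^ 2) := by
        field_simp
        ring
      push_cast
      linarith [key2 ▸ (by linarith : e (n+1) ^ 2 ≤ δ ^ 2 * ((δ ^ 2) ^ n * e 0 ^ 2 +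
          (n : ℝ) * (δ ^ 2) ^ n * (o 0 ^ 2 / δ ^ 2)) + (δ ^ 2) ^ n * o 0 ^ 2)]
  intro k
  have hk := key k
  have hbound : e k ^ 2 ≤ ((k : ℝ) + 1) * (δ ^ 2) ^ k * (e 0 ^ 2 + o 0 ^ 2 / δ ^ 2) := by
    have h1 : (0:ℝ) ≤ (δ ^ 2) ^ k := by positivity
    have h2 : (0:ℝ) ≤ o 0 ^ 2 / δ ^ 2 := by positivity
    have h3 : (0:ℝ) ≤ e 0 ^ 2 := sq_nonneg _
    nlinarith [mul_nonneg (mul_nonneg (Nat.cast_nonneg (α := ℝ) k) h1) h3, mul_nonneg h1 h2]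
  have hRHSnn : (0:ℝ) ≤ ((k : ℝ) + 1) * (δ ^ 2) ^ k * (e 0 ^ 2 + o 0 ^ 2 / δ ^ 2) := by
    positivity
  have := Real.sqrt_le_sqrt hbound
  rw [Real.sqrt_sq (he k)] at this
  refine this.trans (le_of_eq ?_)
  rw [Real.sqrt_mul (by positivity), Real.sqrt_mul (by positivity)]
  congr 1
  congr 1
  rw [← pow_mul, show 2 * k = k * 2 by ring, pow_mul, Real.sqrt_sq (by positivity)]
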